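/- Let B be a Banach function algebra on a compact Hausdorff space X, let x ∈ X, and let A be the uniform closure of B in C(X) (so A is a uniform algebra on X). If B is strongly regular at x, then the set {f ∈ B : f vanishes on some neighbourhood of x} is dense, with respect to the sup norm, in M_x = {f ∈ A : f(x) = 0}. -/

import Mathlib

open Topology

/-- Let `B` be a Banach function algebra on a compact Hausdorff space `X`, let `x ∈ X`,
and let `A` be the uniform closure of `B` in `C(X)`. If `B` is strongly regular at `x`,
then `J_x(B)` (the functions of `B` vanishing near `x`) is dense, in the sup norm, in
`M_x(A) = {f ∈ A : f x = 0}`. -/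
theorem stmt_15 {X : Type*} [TopologicalSpace X] [CompactSpace X] [T2Space X]
    {B : Type*} [NormedCommRing B] [NormedAlgebra ℂ B] [CompleteSpace B]
    (ι : B →ₐ[ℂ] C(X, ℂ)) (hι : Function.Injective ι)
    (hsep : ∀ x y : X, x ≠ y → ∃ f : B, ι f x ≠ ι f y)
    (x : X)
    (hsr : {g : B | ι g x = 0} ⊆ closure {g : B | ∃ U ∈ 𝓝 x, ∀ y ∈ U, ι g y = 0}) :
    {f : C(X, ℂ) | f ∈ closure (Set.range fun g : B => ι g) ∧ f x = 0} ⊆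
      closure ((fun g : B => ι g) '' {g : B | ∃ U ∈ 𝓝 x, ∀ y ∈ U, ι g y = 0}) := by
  -- key bound: evaluation gives characters, so `‖ι b y‖ ≤ ‖b‖ * ‖1‖`
  have key : ∀ b : B, ‖ι b‖ ≤ ‖b‖ * ‖(1 : B)‖ := by
    intro b
    apply ContinuousMap.norm_le _ (by positivity) |>.mpr
    intro y
    exact AlgHom.norm_apply_le_self_mul_norm_one
      ((ContinuousMap.evalAlgHom ℂ ℂ y).comp ι) b
  rintro f ⟨hfc, hfx⟩
  rw [Metric.mem_closure_iff]
  intro ε hε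
  obtain ⟨a, ⟨h, rfl⟩, hdist⟩ := Metric.mem_closure_iff.mp hfc (ε / 3) (by positivity)
  have hx : ‖ι h x‖ < ε / 3 := by
    have : ‖f x - ι h x‖ ≤ ‖f - ι h‖ := by
      simpa using ContinuousMap.norm_coe_le_norm (f - ι h) x
    rw [hfx, zero_sub, norm_neg] at this
    calc ‖ι h x‖ ≤ ‖f - ι h‖ := this
      _ < ε / 3 := by rwa [dist_eq_norm] at hdist
  set c : ℂ := ι h x with hc
  set h' : B := h - algebraMap ℂ B c with hh'
  have hι'x : ι h' x = 0 := by
    simp [hh', map_sub, AlgHom.commutes, ← hc]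
  have hmem := hsr hι'x
  obtain ⟨g, hgJ, hg⟩ := Metric.mem_closure_iff.mp hmem
    (ε / (3 * (‖(1 : B)‖ + 1))) (by positivity)
  refine ⟨ι g, ⟨g, hgJ, rfl⟩, ?_⟩
  have b1 : dist (ι h) (ι h') ≤ ‖c‖ := by
    rw [dist_eq_norm, ← map_sub]
    have : h - h' = algebraMap ℂ B c := by rw [hh']; ring
    rw [this, AlgHom.commutes]
    calc ‖(algebraMap ℂ C(X, ℂ)) c‖ ≤ ‖c‖ := by
          apply ContinuousMap.norm_le _ (norm_nonneg c) |>.mpr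
          intro y
          simp [Algebra.algebraMap_eq_smul_one]
      _ = ‖c‖ := rfl
  have b2 : dist (ι h') (ι g) < ε / 3 := by
    rw [dist_eq_norm, ← map_sub]
    calc ‖ι (h' - g)‖ ≤ ‖h' - g‖ * ‖(1 : B)‖ := key _
      _ ≤ ‖h' - g‖ * (‖(1 : B)‖ + 1) := by
          apply mul_le_mul_of_nonneg_left (by linarith) (norm_nonneg _)
      _ < ε / (3 * (‖(1 : B)‖ + 1)) * (‖(1 : B)‖ + 1) := by
          apply mul_lt_mul_of_pos_right _ (by positivity)
          rwa [dist_eq_norm] at hg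
      _ = ε / 3 := by field_simp
  calc dist f (ι g) ≤ dist f (ι h) + dist (ι h) (ι h') + dist (ι h') (ι g) :=
        dist_triangle4 f (ι h) (ι h') (ι g)
    _ < ε / 3 + ε / 3 + ε / 3 := by
        have : dist (ι h) (ι h') < ε / 3 := lt_of_le_of_lt b1 hx
        linarith
    _ = ε := by ring
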